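/- Let n > 3 be an integer. Let v = (v^X, v^Y, v^Z) : ℝ³ → ℝ³ be the divergence-conforming B-spline velocity field of order 3 with coefficients φ^X, φ^Y, φ^Z. Then for every (x,y,z) ∈ [0,1]³, the divergence (∂v^X/∂x + ∂v^Y/∂y + ∂v^Z/∂z)(x,y,z) exists and equals ∑_{i_X,i_Y,i_Z=−2}^{n−1} B²_{i_X}(x) B²_{i_Y}(y) B²_{i_Z}(z) · ψ(i_X,i_Y,i_Z), where ψ(i) = n·(φ^X(i_X,i_Y,i_Z) − φ^X(i_X−1,i_Y,i_Z)) + n·(φ^Y(i_X,i_Y,i_Z) − φ^Y(i_X,i_Y−1,i_Z)) + n·(φ^Z(i_X,i_Y,i_Z) − φ^Z(i_X,i_Y,i_Z−1)). -/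

import Mathlib

/-- The quadratic uniform B-spline. -/
noncomputable def B2 (t : ℝ) : ℝ :=
  if |t| ≤ 1/2 then 3/4 - t^2
  else if |t| ≤ 3/2 then (1/2) * (3/2 - |t|)^2
  else 0

/-- The cubic uniform B-spline. -/
noncomputable def B3 (t : ℝ) : ℝ :=
  if |t| ≤ 1 then (1/6) * (4 - 3*t^2*(2 - |t|))
  else if |t| ≤ 2 then (1/6) * (2 - |t|)^3
  else 0

/-- Order-2 shifted basis function at knot index `j` on the uniform grid of spacing `1/n`. -/
noncomputable def B2j (n : ℤ) (j : ℤ) (u : ℝ) : ℝ :=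
  B2 ((n : ℝ) * u - (j : ℝ) - 3/2)

/-- Order-3 shifted basis function at knot index `j` on the uniform grid of spacing `1/n`. -/
noncomputable def B3j (n : ℤ) (j : ℤ) (u : ℝ) : ℝ :=
  B3 ((n : ℝ) * u - (j : ℝ) - 2)

/-- First component of the divergence-conforming B-spline velocity field of order 3. -/
noncomputable def vX (n : ℤ) (φ : ℤ → ℤ → ℤ → ℝ) (x y z : ℝ) : ℝ :=
  ∑ iX ∈ Finset.Icc (-3 : ℤ) (n-1), ∑ iY ∈ Finset.Icc (-2 : ℤ) (n-1),
    ∑ iZ ∈ Finset.Icc (-2 : ℤ) (n-1),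
      B3j n iX x * B2j n iY y * B2j n iZ z * φ iX iY iZ

/-- Second component of the divergence-conforming B-spline velocity field of order 3. -/
noncomputable def vY (n : ℤ) (φ : ℤ → ℤ → ℤ → ℝ) (x y z : ℝ) : ℝ :=
  ∑ iX ∈ Finset.Icc (-2 : ℤ) (n-1), ∑ iY ∈ Finset.Icc (-3 : ℤ) (n-1),
    ∑ iZ ∈ Finset.Icc (-2 : ℤ) (n-1),
      B2j n iX x * B3j n iY y * B2j n iZ z * φ iX iY iZ

/-- Third component of the divergence-conforming B-spline velocity field of order 3. -/
noncomputable def vZ (n : ℤ) (φ : ℤ → ℤ → ℤ → ℝ) (x y z : ℝ) : ℝ :=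
  ∑ iX ∈ Finset.Icc (-2 : ℤ) (n-1), ∑ iY ∈ Finset.Icc (-2 : ℤ) (n-1),
    ∑ iZ ∈ Finset.Icc (-3 : ℤ) (n-1),
      B2j n iX x * B2j n iY y * B3j n iZ z * φ iX iY iZ

lemma B2_low {t : ℝ} (h : |t| ≤ 1/2) : B2 t = 3/4 - t^2 := by
  rw [B2, if_pos h]

lemma B2_mid_pos {t : ℝ} (h1 : 1/2 ≤ t) (h2 : t ≤ 3/2) : B2 t = (1/2)*(3/2 - t)^2 := by
  have ha : |t| = t := abs_of_nonneg (by linarith)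
  rw [B2, ha]
  split_ifs with h
  · have : t = 1/2 := le_antisymm h h1
    subst this; norm_num
  · ring

lemma B2_mid_neg {t : ℝ} (h1 : t ≤ -1/2) (h2 : -3/2 ≤ t) : B2 t = (1/2)*(3/2 + t)^2 := by
  have ha : |t| = -t := abs_of_nonpos (by linarith)
  rw [B2, ha]
  split_ifs with h h'
  · have : t = -1/2 := le_antisymm h1 (by linarith)
    subst this; norm_num
  · ring
  · linarith

lemma B2_zero {t : ℝ} (h : 3/2 ≤ |t|) : B2 t = 0 := by
  rw [B2]
  split_ifs with h1 h2
  · linarith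
  · have : |t| = 3/2 := le_antisymm h2 h
    rw [this]; ring
  · rfl

lemma hasDerivAt_cubic (c0 c1 c2 c3 t : ℝ) :
    HasDerivAt (fun s : ℝ => c0 + c1*s + c2*s^2 + c3*s^3) (c1 + 2*c2*t + 3*c3*t^2) t := by
  have h1 := (hasDerivAt_id t).const_mul c1
  have h2 := (hasDerivAt_pow 2 t).const_mul c2
  have h3 := (hasDerivAt_pow 3 t).const_mul c3
  have := ((hasDerivAt_const t c0).add h1).add h2 |>.add h3
  simp only [Pi.add_def, id] at this
  refine this.congr_deriv ?_
  push_cast; ring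

lemma glue_deriv {f g h : ℝ → ℝ} {d t a b : ℝ} (ha : a < t) (hb : t < b)
    (hg : HasDerivAt g d t) (hh : HasDerivAt h d t)
    (h1 : ∀ s, a < s → s ≤ t → f s = g s) (h2 : ∀ s, t ≤ s → s < b → f s = h s) :
    HasDerivAt f d t := by
  have H1 : HasDerivWithinAt f d (Set.Ioc a t) t :=
    (hg.hasDerivWithinAt).congr (fun s hs => h1 s hs.1 hs.2) (h1 t ha le_rfl)
  have H2 : HasDerivWithinAt f d (Set.Ico t b) t :=
    (hh.hasDerivWithinAt).congr (fun s hs => h2 s hs.1 hs.2) (h2 t le_rfl hb)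
  have H := H1.union H2
  rw [Set.Ioc_union_Ico_eq_Ioo ha hb] at H
  exact H.hasDerivAt (Ioo_mem_nhds ha hb)

lemma E0L {s : ℝ} (h : s ≤ -2) : B3 s = 0 + 0*s + 0*s^2 + 0*s^3 := by
  have ha : |s| = -s := abs_of_nonpos (by linarith)
  rw [B3, ha]
  split_ifs with h1 h2
  · linarith
  · have : s = -2 := le_antisymm h (by linarith)
    subst this; norm_num
  · ring

lemma E0R {s : ℝ} (h : 2 ≤ s) : B3 s = 0 + 0*s + 0*s^2 + 0*s^3 := by
  have ha : |s| = s := abs_of_nonneg (by linarith)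
  rw [B3, ha]
  split_ifs with h1 h2
  · linarith
  · have : s = 2 := le_antisymm h2 h
    subst this; norm_num
  · ring

lemma E2 {s : ℝ} (h1 : -2 ≤ s) (h2 : s ≤ -1) : B3 s = 4/3 + 2*s + 1*s^2 + (1/6)*s^3 := by
  have ha : |s| = -s := abs_of_nonpos (by linarith)
  rw [B3, ha]
  split_ifs with h h'
  · have : s = -1 := le_antisymm h2 (by linarith)
    subst this; norm_num
  · ring
  · linarith

lemma E3 {s : ℝ} (h1 : -1 ≤ s) (h2 : s ≤ 0) : B3 s = 2/3 + 0*s + (-1)*s^2 + (-(1/2))*s^3 := by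
  have ha : |s| = -s := abs_of_nonpos h2
  rw [B3, ha, if_pos (by linarith)]
  ring

lemma E4 {s : ℝ} (h1 : 0 ≤ s) (h2 : s ≤ 1) : B3 s = 2/3 + 0*s + (-1)*s^2 + (1/2)*s^3 := by
  have ha : |s| = s := abs_of_nonneg h1
  rw [B3, ha, if_pos (by linarith)]
  ring

lemma E5 {s : ℝ} (h1 : 1 ≤ s) (h2 : s ≤ 2) : B3 s = 4/3 + (-2)*s + 1*s^2 + (-(1/6))*s^3 := by
  have ha : |s| = s := abs_of_nonneg (by linarith)
  rw [B3, ha]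
  split_ifs with h h'
  · have : s = 1 := le_antisymm h h1
    subst this; norm_num
  · ring

lemma hasDerivAt_B3 (t : ℝ) : HasDerivAt B3 (B2 (t + 1/2) - B2 (t - 1/2)) t := by
  rcases lt_trichotomy t (-2) with h | h | h
  · -- t < -2
    have hd : B2 (t + 1/2) - B2 (t - 1/2) = 0 + 2*0*t + 3*0*t^2 := by
      rw [B2_zero (by rw [abs_of_nonpos (by linarith)]; linarith),
          B2_zero (by rw [abs_of_nonpos (by linarith)]; linarith)]
      ring
    rw [hd]
    exact glue_deriv (show t - 1 < t by linarith) h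
      (hasDerivAt_cubic 0 0 0 0 t) (hasDerivAt_cubic 0 0 0 0 t)
      (fun s _ hs2 => E0L (by linarith)) (fun s hs1 _ => E0L (by linarith))
  · subst h
    have hd : B2 ((-2:ℝ) + 1/2) - B2 ((-2:ℝ) - 1/2) = 0 := by
      rw [B2_zero (by rw [abs_of_nonpos (by norm_num)]; norm_num),
          B2_zero (by rw [abs_of_nonpos (by norm_num)]; norm_num)]
      ring
    rw [hd]
    refine glue_deriv (show (-3:ℝ) < -2 by norm_num) (show (-2:ℝ) < -1 by norm_num)
      ?_ ?_ (fun s _ hs2 => E0L hs2) (fun s hs1 hs2 => E2 hs1 (by linarith))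
    · convert hasDerivAt_cubic 0 0 0 0 (-2:ℝ) using 1; norm_num
    · convert hasDerivAt_cubic (4/3) 2 1 (1/6) (-2:ℝ) using 1; norm_num
  rcases lt_trichotomy t (-1) with h' | h' | h'
  · -- -2 < t < -1
    have hd : B2 (t + 1/2) - B2 (t - 1/2) = 2 + 2*1*t + 3*(1/6)*t^2 := by
      rw [B2_mid_neg (by linarith) (by linarith),
          B2_zero (by rw [abs_of_nonpos (by linarith)]; linarith)]
      ring
    rw [hd]
    exact glue_deriv h h' (hasDerivAt_cubic (4/3) 2 1 (1/6) t) (hasDerivAt_cubic (4/3) 2 1 (1/6) t)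
      (fun s hs1 hs2 => E2 (by linarith) (by linarith))
      (fun s hs1 hs2 => E2 (by linarith) (by linarith))
  · subst h'
    have hd : B2 ((-1:ℝ) + 1/2) - B2 ((-1:ℝ) - 1/2) = 1/2 := by
      rw [B2_low (by rw [abs_of_nonpos (by norm_num)]; norm_num),
          B2_zero (by rw [abs_of_nonpos (by norm_num)]; norm_num)]
      norm_num
    rw [hd]
    refine glue_deriv (show (-2:ℝ) < -1 by norm_num) (show (-1:ℝ) < 0 by norm_num)
      ?_ ?_ (fun s hs1 hs2 => E2 (by linarith) hs2) (fun s hs1 hs2 => E3 hs1 (by linarith))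
    · convert hasDerivAt_cubic (4/3) 2 1 (1/6) (-1:ℝ) using 1; norm_num
    · convert hasDerivAt_cubic (2/3) 0 (-1) (-(1/2)) (-1:ℝ) using 1; norm_num
  rcases lt_trichotomy t 0 with h0 | h0 | h0
  · -- -1 < t < 0
    have hd : B2 (t + 1/2) - B2 (t - 1/2) = 0 + 2*(-1)*t + 3*(-(1/2))*t^2 := by
      rw [B2_low (abs_le.mpr ⟨by linarith, by linarith⟩),
          B2_mid_neg (by linarith) (by linarith)]
      ring
    rw [hd]
    exact glue_deriv h' h0
      (hasDerivAt_cubic (2/3) 0 (-1) (-(1/2)) t) (hasDerivAt_cubic (2/3) 0 (-1) (-(1/2)) t)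
      (fun s hs1 hs2 => E3 (by linarith) (by linarith))
      (fun s hs1 hs2 => E3 (by linarith) (by linarith))
  · subst h0
    have hd : B2 ((0:ℝ) + 1/2) - B2 ((0:ℝ) - 1/2) = 0 := by
      rw [B2_low (by rw [abs_of_nonneg (by norm_num)]; norm_num),
          B2_low (by rw [abs_of_nonpos (by norm_num)]; norm_num)]
      norm_num
    rw [hd]
    refine glue_deriv (show (-1:ℝ) < 0 by norm_num) (show (0:ℝ) < 1 by norm_num)
      ?_ ?_ (fun s hs1 hs2 => E3 (by linarith) hs2) (fun s hs1 hs2 => E4 hs1 (by linarith))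
    · convert hasDerivAt_cubic (2/3) 0 (-1) (-(1/2)) (0:ℝ) using 1; norm_num
    · convert hasDerivAt_cubic (2/3) 0 (-1) (1/2) (0:ℝ) using 1; norm_num
  rcases lt_trichotomy t 1 with h1 | h1 | h1
  · -- 0 < t < 1
    have hd : B2 (t + 1/2) - B2 (t - 1/2) = 0 + 2*(-1)*t + 3*(1/2)*t^2 := by
      rw [B2_mid_pos (by linarith) (by linarith),
          B2_low (abs_le.mpr ⟨by linarith, by linarith⟩)]
      ring
    rw [hd]
    exact glue_deriv h0 h1
      (hasDerivAt_cubic (2/3) 0 (-1) (1/2) t) (hasDerivAt_cubic (2/3) 0 (-1) (1/2) t)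
      (fun s hs1 hs2 => E4 (by linarith) (by linarith))
      (fun s hs1 hs2 => E4 (by linarith) (by linarith))
  · subst h1
    have hd : B2 ((1:ℝ) + 1/2) - B2 ((1:ℝ) - 1/2) = -(1/2) := by
      rw [B2_zero (by rw [abs_of_nonneg (by norm_num)]; norm_num),
          B2_low (by rw [abs_of_nonneg (by norm_num)]; norm_num)]
      norm_num
    rw [hd]
    refine glue_deriv (show (0:ℝ) < 1 by norm_num) (show (1:ℝ) < 2 by norm_num)
      ?_ ?_ (fun s hs1 hs2 => E4 (by linarith) hs2) (fun s hs1 hs2 => E5 hs1 (by linarith))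
    · convert hasDerivAt_cubic (2/3) 0 (-1) (1/2) (1:ℝ) using 1; norm_num
    · convert hasDerivAt_cubic (4/3) (-2) 1 (-(1/6)) (1:ℝ) using 1; norm_num
  rcases lt_trichotomy t 2 with h2 | h2 | h2
  · -- 1 < t < 2
    have hd : B2 (t + 1/2) - B2 (t - 1/2) = -2 + 2*1*t + 3*(-(1/6))*t^2 := by
      rw [B2_zero (by rw [abs_of_nonneg (by linarith)]; linarith),
          B2_mid_pos (by linarith) (by linarith)]
      ring
    rw [hd]
    exact glue_deriv h1 h2
      (hasDerivAt_cubic (4/3) (-2) 1 (-(1/6)) t) (hasDerivAt_cubic (4/3) (-2) 1 (-(1/6)) t)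
      (fun s hs1 hs2 => E5 (by linarith) (by linarith))
      (fun s hs1 hs2 => E5 (by linarith) (by linarith))
  · subst h2
    have hd : B2 ((2:ℝ) + 1/2) - B2 ((2:ℝ) - 1/2) = 0 := by
      rw [B2_zero (by rw [abs_of_nonneg (by norm_num)]; norm_num),
          B2_zero (by rw [abs_of_nonneg (by norm_num)]; norm_num)]
      norm_num
    rw [hd]
    refine glue_deriv (show (1:ℝ) < 2 by norm_num) (show (2:ℝ) < 3 by norm_num)
      ?_ ?_ (fun s hs1 hs2 => E5 (by linarith) hs2) (fun s hs1 hs2 => E0R hs1)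
    · convert hasDerivAt_cubic (4/3) (-2) 1 (-(1/6)) (2:ℝ) using 1; norm_num
    · convert hasDerivAt_cubic 0 0 0 0 (2:ℝ) using 1; norm_num
  · -- 2 < t
    have hd : B2 (t + 1/2) - B2 (t - 1/2) = 0 + 2*0*t + 3*0*t^2 := by
      rw [B2_zero (by rw [abs_of_nonneg (by linarith)]; linarith),
          B2_zero (by rw [abs_of_nonneg (by linarith)]; linarith)]
      ring
    rw [hd]
    exact glue_deriv h2 (show t < t + 1 by linarith)
      (hasDerivAt_cubic 0 0 0 0 t) (hasDerivAt_cubic 0 0 0 0 t)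
      (fun s hs1 _ => E0R (by linarith)) (fun s hs1 _ => E0R (by linarith))

lemma hasDerivAt_B3j (n j : ℤ) (u : ℝ) :
    HasDerivAt (fun u' => B3j n j u') ((n:ℝ) * (B2j n j u - B2j n (j+1) u)) u := by
  have h : HasDerivAt (fun u' : ℝ => (n:ℝ)*u' - (j:ℝ) - 2) (n:ℝ) u := by
    simpa using (((hasDerivAt_id u).const_mul (n:ℝ)).sub_const ((j:ℝ))).sub_const 2
  have H := (hasDerivAt_B3 ((n:ℝ)*u - (j:ℝ) - 2)).comp u h
  have e1 : (n:ℝ)*u - (j:ℝ) - 2 + 1/2 = (n:ℝ)*u - (j:ℝ) - 3/2 := by ring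
  have e2 : (n:ℝ)*u - (j:ℝ) - 2 - 1/2 = (n:ℝ)*u - ((j:ℝ)+1) - 3/2 := by ring
  rw [e1, e2] at H
  have : (B2 ((n:ℝ)*u - (j:ℝ) - 3/2) - B2 ((n:ℝ)*u - ((j:ℝ)+1) - 3/2)) * (n:ℝ)
      = (n:ℝ) * (B2j n j u - B2j n (j+1) u) := by
    rw [B2j, B2j]; push_cast; ring
  rw [this] at H
  exact H

lemma B2j_left_zero {n : ℤ} (hn : 0 < n) {x : ℝ} (hx : 0 ≤ x) : B2j n (-3) x = 0 := by
  have hnx : (0:ℝ) ≤ (n:ℝ) * x := by positivity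
  apply B2_zero
  rw [abs_of_nonneg (by push_cast; linarith)]
  push_cast; linarith

lemma B2j_right_zero {n : ℤ} (hn : 0 < n) {x : ℝ} (hx : x ≤ 1) : B2j n n x = 0 := by
  have hnx : (n:ℝ) * x ≤ (n:ℝ) := by
    have : (0:ℝ) < n := by exact_mod_cast hn
    nlinarith
  apply B2_zero
  rw [abs_of_nonpos (by linarith)]
  linarith

lemma abel_sum (n : ℤ) (hn : 3 < n) (f a : ℤ → ℝ) (hL : f (-3) = 0) (hR : f n = 0) :
    ∑ i ∈ Finset.Icc (-3 : ℤ) (n-1), (f i - f (i+1)) * a i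
      = ∑ i ∈ Finset.Icc (-2 : ℤ) (n-1), f i * (a i - a (i-1)) := by
  have hsplit : ∑ i ∈ Finset.Icc (-3 : ℤ) (n-1), (f i - f (i+1)) * a i
      = ∑ i ∈ Finset.Icc (-3 : ℤ) (n-1), f i * a i
        - ∑ i ∈ Finset.Icc (-3 : ℤ) (n-1), f (i+1) * a i := by
    rw [← Finset.sum_sub_distrib]
    exact Finset.sum_congr rfl fun i _ => by ring
  have hre : ∑ i ∈ Finset.Icc (-3 : ℤ) (n-1), f (i+1) * a i
      = ∑ j ∈ Finset.Icc (-2 : ℤ) n, f j * a (j-1) := by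
    apply Finset.sum_nbij' (fun i => i + 1) (fun j => j - 1) <;>
      simp only [Finset.mem_Icc] <;> intros <;> first | omega | (push_cast; ring_nf)
  have h1 : Finset.Icc (-3 : ℤ) (n-1) = insert (-3 : ℤ) (Finset.Icc (-2 : ℤ) (n-1)) := by
    ext i; simp only [Finset.mem_Icc, Finset.mem_insert]; omega
  have h2 : Finset.Icc (-2 : ℤ) n = insert n (Finset.Icc (-2 : ℤ) (n-1)) := by
    ext i; simp only [Finset.mem_Icc, Finset.mem_insert]; omega
  rw [hsplit, hre, h1, h2,
      Finset.sum_insert (by simp only [Finset.mem_Icc]; omega),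
      Finset.sum_insert (by simp only [Finset.mem_Icc]; omega), hL, hR]
  simp only [zero_mul, zero_add]
  rw [← Finset.sum_sub_distrib]
  exact Finset.sum_congr rfl fun i _ => by ring

/-- The divergence of a divergence-conforming B-spline velocity field of order 3 exists at
every point of `[0,1]³` and is the order-2 B-spline with coefficients `ψ` given by the
scaled finite differences of the coefficients `φX, φY, φZ`. -/
theorem divergence_divConforming (n : ℤ) (hn : 3 < n) (φX φY φZ : ℤ → ℤ → ℤ → ℝ)
    (hφX : ∀ iX iY iZ : ℤ,
      ¬(iX ∈ Finset.Icc (-3 : ℤ) (n-1) ∧ iY ∈ Finset.Icc (-2 : ℤ) (n-1) ∧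
        iZ ∈ Finset.Icc (-2 : ℤ) (n-1)) → φX iX iY iZ = 0)
    (hφY : ∀ iX iY iZ : ℤ,
      ¬(iX ∈ Finset.Icc (-2 : ℤ) (n-1) ∧ iY ∈ Finset.Icc (-3 : ℤ) (n-1) ∧
        iZ ∈ Finset.Icc (-2 : ℤ) (n-1)) → φY iX iY iZ = 0)
    (hφZ : ∀ iX iY iZ : ℤ,
      ¬(iX ∈ Finset.Icc (-2 : ℤ) (n-1) ∧ iY ∈ Finset.Icc (-2 : ℤ) (n-1) ∧
        iZ ∈ Finset.Icc (-3 : ℤ) (n-1)) → φZ iX iY iZ = 0)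
    (x y z : ℝ) (hx : x ∈ Set.Icc (0:ℝ) 1) (hy : y ∈ Set.Icc (0:ℝ) 1)
    (hz : z ∈ Set.Icc (0:ℝ) 1) :
    ∃ dX dY dZ : ℝ,
      HasDerivAt (fun x' : ℝ => vX n φX x' y z) dX x ∧
      HasDerivAt (fun y' : ℝ => vY n φY x y' z) dY y ∧
      HasDerivAt (fun z' : ℝ => vZ n φZ x y z') dZ z ∧
      dX + dY + dZ =
        ∑ iX ∈ Finset.Icc (-2 : ℤ) (n-1), ∑ iY ∈ Finset.Icc (-2 : ℤ) (n-1),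
          ∑ iZ ∈ Finset.Icc (-2 : ℤ) (n-1),
            B2j n iX x * B2j n iY y * B2j n iZ z *
              ((n : ℝ) * (φX iX iY iZ - φX (iX - 1) iY iZ) +
               (n : ℝ) * (φY iX iY iZ - φY iX (iY - 1) iZ) +
               (n : ℝ) * (φZ iX iY iZ - φZ iX iY (iZ - 1))) := by
  have hn' : (0:ℤ) < n := by omega
  refine ⟨∑ iX ∈ Finset.Icc (-3 : ℤ) (n-1), ∑ iY ∈ Finset.Icc (-2 : ℤ) (n-1),
      ∑ iZ ∈ Finset.Icc (-2 : ℤ) (n-1),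
        (n:ℝ) * (B2j n iX x - B2j n (iX+1) x) * B2j n iY y * B2j n iZ z * φX iX iY iZ,
    ∑ iX ∈ Finset.Icc (-2 : ℤ) (n-1), ∑ iY ∈ Finset.Icc (-3 : ℤ) (n-1),
      ∑ iZ ∈ Finset.Icc (-2 : ℤ) (n-1),
        B2j n iX x * ((n:ℝ) * (B2j n iY y - B2j n (iY+1) y)) * B2j n iZ z * φY iX iY iZ,
    ∑ iX ∈ Finset.Icc (-2 : ℤ) (n-1), ∑ iY ∈ Finset.Icc (-2 : ℤ) (n-1),
      ∑ iZ ∈ Finset.Icc (-3 : ℤ) (n-1),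
        B2j n iX x * B2j n iY y * ((n:ℝ) * (B2j n iZ z - B2j n (iZ+1) z)) * φZ iX iY iZ,
    ?_, ?_, ?_, ?_⟩
  · unfold vX
    apply HasDerivAt.fun_sum; intro iX _
    apply HasDerivAt.fun_sum; intro iY _
    apply HasDerivAt.fun_sum; intro iZ _
    exact (((hasDerivAt_B3j n iX x).mul_const _).mul_const _).mul_const _
  · unfold vY
    apply HasDerivAt.fun_sum; intro iX _
    apply HasDerivAt.fun_sum; intro iY _
    apply HasDerivAt.fun_sum; intro iZ _
    exact (((hasDerivAt_B3j n iY y).const_mul _).mul_const _).mul_const _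
  · unfold vZ
    apply HasDerivAt.fun_sum; intro iX _
    apply HasDerivAt.fun_sum; intro iY _
    apply HasDerivAt.fun_sum; intro iZ _
    exact (((hasDerivAt_B3j n iZ z).const_mul _).mul_const _)
  · have hdX : ∑ iX ∈ Finset.Icc (-3 : ℤ) (n-1), ∑ iY ∈ Finset.Icc (-2 : ℤ) (n-1),
        ∑ iZ ∈ Finset.Icc (-2 : ℤ) (n-1),
          (n:ℝ) * (B2j n iX x - B2j n (iX+1) x) * B2j n iY y * B2j n iZ z * φX iX iY iZ
        = ∑ iX ∈ Finset.Icc (-2 : ℤ) (n-1), ∑ iY ∈ Finset.Icc (-2 : ℤ) (n-1),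
        ∑ iZ ∈ Finset.Icc (-2 : ℤ) (n-1),
          B2j n iX x * B2j n iY y * B2j n iZ z *
            ((n:ℝ) * (φX iX iY iZ - φX (iX - 1) iY iZ)) := by
      have habel : ∑ iX ∈ Finset.Icc (-3 : ℤ) (n-1),
            (B2j n iX x - B2j n (iX+1) x) *
              ((n:ℝ) * ∑ iY ∈ Finset.Icc (-2 : ℤ) (n-1), ∑ iZ ∈ Finset.Icc (-2 : ℤ) (n-1),
                B2j n iY y * B2j n iZ z * φX iX iY iZ)
          = ∑ iX ∈ Finset.Icc (-2 : ℤ) (n-1),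
            B2j n iX x *
              (((n:ℝ) * ∑ iY ∈ Finset.Icc (-2 : ℤ) (n-1), ∑ iZ ∈ Finset.Icc (-2 : ℤ) (n-1),
                B2j n iY y * B2j n iZ z * φX iX iY iZ)
               - ((n:ℝ) * ∑ iY ∈ Finset.Icc (-2 : ℤ) (n-1), ∑ iZ ∈ Finset.Icc (-2 : ℤ) (n-1),
                B2j n iY y * B2j n iZ z * φX (iX-1) iY iZ)) :=
        abel_sum n hn (fun i => B2j n i x)
          (fun i => (n:ℝ) * ∑ iY ∈ Finset.Icc (-2 : ℤ) (n-1),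
            ∑ iZ ∈ Finset.Icc (-2 : ℤ) (n-1), B2j n iY y * B2j n iZ z * φX i iY iZ)
          (B2j_left_zero hn' hx.1) (B2j_right_zero hn' hx.2)
      calc ∑ iX ∈ Finset.Icc (-3 : ℤ) (n-1), ∑ iY ∈ Finset.Icc (-2 : ℤ) (n-1),
            ∑ iZ ∈ Finset.Icc (-2 : ℤ) (n-1),
              (n:ℝ) * (B2j n iX x - B2j n (iX+1) x) * B2j n iY y * B2j n iZ z * φX iX iY iZ
          = ∑ iX ∈ Finset.Icc (-3 : ℤ) (n-1),
            (B2j n iX x - B2j n (iX+1) x) *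
              ((n:ℝ) * ∑ iY ∈ Finset.Icc (-2 : ℤ) (n-1), ∑ iZ ∈ Finset.Icc (-2 : ℤ) (n-1),
                B2j n iY y * B2j n iZ z * φX iX iY iZ) := by
            refine Finset.sum_congr rfl fun iX _ => ?_
            simp only [Finset.mul_sum]
            exact Finset.sum_congr rfl fun iY _ =>
              Finset.sum_congr rfl fun iZ _ => by ring
        _ = _ := habel
        _ = _ := by
            refine Finset.sum_congr rfl fun iX _ => ?_
            simp only [Finset.mul_sum, ← Finset.sum_sub_distrib]
            exact Finset.sum_congr rfl fun iY _ =>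
              Finset.sum_congr rfl fun iZ _ => by ring
    have hdY : ∑ iX ∈ Finset.Icc (-2 : ℤ) (n-1), ∑ iY ∈ Finset.Icc (-3 : ℤ) (n-1),
        ∑ iZ ∈ Finset.Icc (-2 : ℤ) (n-1),
          B2j n iX x * ((n:ℝ) * (B2j n iY y - B2j n (iY+1) y)) * B2j n iZ z * φY iX iY iZ
        = ∑ iX ∈ Finset.Icc (-2 : ℤ) (n-1), ∑ iY ∈ Finset.Icc (-2 : ℤ) (n-1),
        ∑ iZ ∈ Finset.Icc (-2 : ℤ) (n-1),
          B2j n iX x * B2j n iY y * B2j n iZ z *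
            ((n:ℝ) * (φY iX iY iZ - φY iX (iY - 1) iZ)) := by
      refine Finset.sum_congr rfl fun iX _ => ?_
      have habel : ∑ iY ∈ Finset.Icc (-3 : ℤ) (n-1),
            (B2j n iY y - B2j n (iY+1) y) *
              ((n:ℝ) * ∑ iZ ∈ Finset.Icc (-2 : ℤ) (n-1),
                B2j n iX x * B2j n iZ z * φY iX iY iZ)
          = ∑ iY ∈ Finset.Icc (-2 : ℤ) (n-1),
            B2j n iY y *
              (((n:ℝ) * ∑ iZ ∈ Finset.Icc (-2 : ℤ) (n-1),
                B2j n iX x * B2j n iZ z * φY iX iY iZ)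
               - ((n:ℝ) * ∑ iZ ∈ Finset.Icc (-2 : ℤ) (n-1),
                B2j n iX x * B2j n iZ z * φY iX (iY-1) iZ)) :=
        abel_sum n hn (fun i => B2j n i y)
          (fun i => (n:ℝ) * ∑ iZ ∈ Finset.Icc (-2 : ℤ) (n-1),
            B2j n iX x * B2j n iZ z * φY iX i iZ)
          (B2j_left_zero hn' hy.1) (B2j_right_zero hn' hy.2)
      calc ∑ iY ∈ Finset.Icc (-3 : ℤ) (n-1), ∑ iZ ∈ Finset.Icc (-2 : ℤ) (n-1),
            B2j n iX x * ((n:ℝ) * (B2j n iY y - B2j n (iY+1) y)) * B2j n iZ z * φY iX iY iZ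
          = ∑ iY ∈ Finset.Icc (-3 : ℤ) (n-1),
            (B2j n iY y - B2j n (iY+1) y) *
              ((n:ℝ) * ∑ iZ ∈ Finset.Icc (-2 : ℤ) (n-1),
                B2j n iX x * B2j n iZ z * φY iX iY iZ) := by
            refine Finset.sum_congr rfl fun iY _ => ?_
            simp only [Finset.mul_sum]
            exact Finset.sum_congr rfl fun iZ _ => by ring
        _ = _ := habel
        _ = _ := by
            refine Finset.sum_congr rfl fun iY _ => ?_
            simp only [Finset.mul_sum, ← Finset.sum_sub_distrib]
            exact Finset.sum_congr rfl fun iZ _ => by ring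
    have hdZ : ∑ iX ∈ Finset.Icc (-2 : ℤ) (n-1), ∑ iY ∈ Finset.Icc (-2 : ℤ) (n-1),
        ∑ iZ ∈ Finset.Icc (-3 : ℤ) (n-1),
          B2j n iX x * B2j n iY y * ((n:ℝ) * (B2j n iZ z - B2j n (iZ+1) z)) * φZ iX iY iZ
        = ∑ iX ∈ Finset.Icc (-2 : ℤ) (n-1), ∑ iY ∈ Finset.Icc (-2 : ℤ) (n-1),
        ∑ iZ ∈ Finset.Icc (-2 : ℤ) (n-1),
          B2j n iX x * B2j n iY y * B2j n iZ z *
            ((n:ℝ) * (φZ iX iY iZ - φZ iX iY (iZ - 1))) := by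
      refine Finset.sum_congr rfl fun iX _ => ?_
      refine Finset.sum_congr rfl fun iY _ => ?_
      have habel : ∑ iZ ∈ Finset.Icc (-3 : ℤ) (n-1),
            (B2j n iZ z - B2j n (iZ+1) z) *
              ((n:ℝ) * (B2j n iX x * B2j n iY y * φZ iX iY iZ))
          = ∑ iZ ∈ Finset.Icc (-2 : ℤ) (n-1),
            B2j n iZ z *
              (((n:ℝ) * (B2j n iX x * B2j n iY y * φZ iX iY iZ))
               - ((n:ℝ) * (B2j n iX x * B2j n iY y * φZ iX iY (iZ-1)))) :=
        abel_sum n hn (fun i => B2j n i z)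
          (fun i => (n:ℝ) * (B2j n iX x * B2j n iY y * φZ iX iY i))
          (B2j_left_zero hn' hz.1) (B2j_right_zero hn' hz.2)
      calc ∑ iZ ∈ Finset.Icc (-3 : ℤ) (n-1),
            B2j n iX x * B2j n iY y * ((n:ℝ) * (B2j n iZ z - B2j n (iZ+1) z)) * φZ iX iY iZ
          = ∑ iZ ∈ Finset.Icc (-3 : ℤ) (n-1),
            (B2j n iZ z - B2j n (iZ+1) z) *
              ((n:ℝ) * (B2j n iX x * B2j n iY y * φZ iX iY iZ)) := by
            exact Finset.sum_congr rfl fun iZ _ => by ring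
        _ = _ := habel
        _ = _ := by
            exact Finset.sum_congr rfl fun iZ _ => by ring
    rw [hdX, hdY, hdZ]
    simp only [← Finset.sum_add_distrib]
    refine Finset.sum_congr rfl fun iX _ => Finset.sum_congr rfl fun iY _ =>
      Finset.sum_congr rfl fun iZ _ => by ring
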